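/- A linear map d : A1 → A1 is a derivation of A1 if and only if d(e1) = 0 and d(e2), d(e3) ∈ span{e2, e3}; in particular the derivation algebra of A1 is 4-dimensional, spanned by the maps d1, d2, d3, d4 determined by d1(e2)=e2, d2(e3)=e3, d3(e2)=e3, d4(e3)=e2 (each vanishing on the remaining basis vectors). -/

import Mathlib

set_option linter.unreachableTactic false
set_option linter.unnecessarySeqFocus false
set_option linter.unusedTactic false

noncomputable section

/-- The underlying space of our 3-dimensional algebras. -/
abbrev V3 : Type := Fin 3 → ℂ
/-- Multiplication of the algebra `A1` (and of `S1`): in the basis `e1 = ![1,0,0]`,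
`e2 = ![0,1,0]`, `e3 = ![0,0,1]`, the element `e1` is the unit and all
products among `e2, e3` vanish. -/
def A1mul : V3 →ₗ[ℂ] V3 →ₗ[ℂ] V3 :=
  LinearMap.mk₂ ℂ (fun x y => ![x 0 * y 0, x 0 * y 1 + x 1 * y 0, x 0 * y 2 + x 2 * y 0])
    (fun x x' y => by funext k; fin_cases k <;> simp <;> ring)
    (fun a x y => by funext k; fin_cases k <;> simp <;> ring)
    (fun x y y' => by funext k; fin_cases k <;> simp <;> ring)
    (fun a x y => by funext k; fin_cases k <;> simp <;> ring)
/-- The basis vector `e1` (the unit). -/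
def e1 : V3 := ![1, 0, 0]
/-- The basis vector `e2`. -/
def e2 : V3 := ![0, 1, 0]
/-- The basis vector `e3`. -/
def e3 : V3 := ![0, 0, 1]

/-- `d : A1 → A1` is a derivation of `A1`. -/
def IsDerA1 (d : V3 →ₗ[ℂ] V3) : Prop :=
  ∀ x y, d (A1mul x y) = A1mul (d x) y + A1mul x (d y)

/-- The derivation `d1`: `d1 (e2) = e2`, vanishing on `e1` and `e3`. -/
def d1 : V3 →ₗ[ℂ] V3 := Matrix.toLin' ![![0, 0, 0], ![0, 1, 0], ![0, 0, 0]]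
/-- The derivation `d2`: `d2 (e3) = e3`, vanishing on `e1` and `e2`. -/
def d2 : V3 →ₗ[ℂ] V3 := Matrix.toLin' ![![0, 0, 0], ![0, 0, 0], ![0, 0, 1]]
/-- The derivation `d3`: `d3 (e2) = e3`, vanishing on `e1` and `e3`. -/
def d3 : V3 →ₗ[ℂ] V3 := Matrix.toLin' ![![0, 0, 0], ![0, 0, 0], ![0, 1, 0]]
/-- The derivation `d4`: `d4 (e3) = e2`, vanishing on `e1` and `e2`. -/
def d4 : V3 →ₗ[ℂ] V3 := Matrix.toLin' ![![0, 0, 0], ![0, 0, 1], ![0, 0, 0]]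

lemma A1mul_apply (x y : V3) :
    A1mul x y = ![x 0 * y 0, x 0 * y 1 + x 1 * y 0, x 0 * y 2 + x 2 * y 0] := rfl

lemma first_coord_iff (v : V3) : v ∈ Submodule.span ℂ {e2, e3} ↔ v 0 = 0 := by
  rw [Submodule.mem_span_pair]
  constructor
  · rintro ⟨a, b, rfl⟩; simp [e2, e3]
  · intro h
    exact ⟨v 1, v 2, by funext k; fin_cases k <;> simp [e2, e3, h]⟩

lemma isDer_iff (d : V3 →ₗ[ℂ] V3) :
    IsDerA1 d ↔ (d e1 = 0 ∧ (d e2) 0 = 0 ∧ (d e3) 0 = 0) := by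
  constructor
  · intro h
    have h11 : A1mul e1 e1 = e1 := by funext k; fin_cases k <;> simp [A1mul_apply, e1]
    have hl : ∀ v : V3, A1mul e1 v = v := by
      intro v; funext k; fin_cases k <;> simp [A1mul_apply, e1]
    have hr : ∀ v : V3, A1mul v e1 = v := by
      intro v; funext k; fin_cases k <;> simp [A1mul_apply, e1]
    have he1 : d e1 = 0 := by
      have := h e1 e1
      rw [h11, hl, hr] at this
      have h2 : d e1 + d e1 = d e1 + 0 := by rw [add_zero]; exact this.symm
      exact (add_left_cancel h2)
    refine ⟨he1, ?_, ?_⟩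
    · have h22 : A1mul e2 e2 = 0 := by funext k; fin_cases k <;> simp [A1mul_apply, e2]
      have h2 := h e2 e2
      rw [h22, map_zero] at h2
      have := congrFun h2.symm 1
      simp [A1mul_apply, e2] at this
      exact this
    · have h33 : A1mul e3 e3 = 0 := by funext k; fin_cases k <;> simp [A1mul_apply, e3]
      have h3 := h e3 e3
      rw [h33, map_zero] at h3
      have := congrFun h3.symm 2
      simp [A1mul_apply, e3] at this
      exact this
  · rintro ⟨h1, h2, h3⟩
    have hx : ∀ x : V3, x = x 0 • e1 + x 1 • e2 + x 2 • e3 := by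
      intro x; funext k; fin_cases k <;> simp [e1, e2, e3]
    have hd : ∀ x : V3, d x = x 1 • d e2 + x 2 • d e3 := by
      intro x
      conv_lhs => rw [hx x]
      simp [h1]
    intro x y
    rw [hd (A1mul x y), hd x, hd y]
    funext k
    fin_cases k <;>
      simp [A1mul_apply, h2, h3, smul_eq_mul] <;> ring
lemma toLin'_apply3 (M : Fin (Nat.succ 2) → Fin 3 → ℂ) (v : V3) :
    Matrix.toLin' M v = Matrix.mulVec M v := rfl
lemma dvals :
    d1 e1 = 0 ∧ d1 e2 = e2 ∧ d1 e3 = 0 ∧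
    d2 e1 = 0 ∧ d2 e2 = 0 ∧ d2 e3 = e3 ∧
    d3 e1 = 0 ∧ d3 e2 = e3 ∧ d3 e3 = 0 ∧
    d4 e1 = 0 ∧ d4 e2 = 0 ∧ d4 e3 = e2 := by
  refine ⟨?_,?_,?_,?_,?_,?_,?_,?_,?_,?_,?_,?_⟩ <;>
    · funext k
      fin_cases k <;>
        simp [d1, d2, d3, d4, e1, e2, e3, toLin'_apply3, Matrix.mulVec,
          dotProduct, Fin.sum_univ_three]

lemma lmap_ext {f g : V3 →ₗ[ℂ] V3} (h1 : f e1 = g e1) (h2 : f e2 = g e2)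
    (h3 : f e3 = g e3) : f = g := by
  have hb : ∀ i : Fin 3, (Pi.basisFun ℂ (Fin 3)) i = ![e1, e2, e3] i := by
    intro i
    funext k
    fin_cases i <;> fin_cases k <;> simp [e1, e2, e3, Pi.single, Function.update, Matrix.vecHead, Matrix.vecTail]
  apply Module.Basis.ext (Pi.basisFun ℂ (Fin 3))
  intro i
  rw [hb i]
  fin_cases i <;> simpa using (by assumption : _)

lemma mem_span4 (d : V3 →ₗ[ℂ] V3) :
    d ∈ Submodule.span ℂ {d1, d2, d3, d4} ↔
      ∃ a b c f : ℂ, d = a • d1 + b • d2 + c • d3 + f • d4 := by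
  simp only [Submodule.mem_span_insert, Submodule.mem_span_singleton]
  constructor
  · rintro ⟨a, _, ⟨b, _, ⟨c, _, ⟨f, rfl⟩, rfl⟩, rfl⟩, rfl⟩
    exact ⟨a, b, c, f, by abel⟩
  · rintro ⟨a, b, c, f, rfl⟩
    exact ⟨a, _, ⟨b, _, ⟨c, _, ⟨f, rfl⟩, rfl⟩, rfl⟩, by abel⟩
lemma dindep : LinearIndependent ℂ ![d1, d2, d3, d4] := by
  obtain ⟨p1, h12, h13, p2, h22, h23, p3, h32, h33, p4, h42e, h42⟩ := dvals
  rw [Fintype.linearIndependent_iff]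
  intro g hg
  rw [Fin.sum_univ_four] at hg
  simp only [Matrix.cons_val_zero, Matrix.cons_val_one, Matrix.head_cons,
    Matrix.cons_val_two, Matrix.tail_cons, Matrix.cons_val_three] at hg
  have H2 := LinearMap.congr_fun hg e2
  have H3 := LinearMap.congr_fun hg e3
  simp [h12, h13, h22, h23, h32, h33, h42e, h42] at H2 H3
  have h0 := congrFun H2 1
  have h2 := congrFun H2 2
  have h1 := congrFun H3 2
  have h3 := congrFun H3 1
  simp [e2, e3] at h0 h1 h2 h3
  intro i
  fin_cases i <;> assumption

lemma span_set_eq : ({d1, d2, d3, d4} : Set (V3 →ₗ[ℂ] V3)) = Set.range ![d1, d2, d3, d4] := by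
  ext x
  simp [Matrix.range_cons, Matrix.range_empty]
  tauto

lemma finrank4 :
    Module.finrank ℂ (Submodule.span ℂ {d1, d2, d3, d4} : Submodule ℂ (V3 →ₗ[ℂ] V3)) = 4 := by
  rw [span_set_eq, finrank_span_eq_card dindep]
  simp
lemma firstrow : ∀ v : V3, d1 v 0 = 0 ∧ d2 v 0 = 0 ∧ d3 v 0 = 0 ∧ d4 v 0 = 0 := by
  intro v
  refine ⟨?_, ?_, ?_, ?_⟩ <;>
    simp [d1, d2, d3, d4, toLin'_apply3, Matrix.mulVec, dotProduct,
      Fin.sum_univ_three]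

theorem derivations_of_A1 :
    (∀ d : V3 →ₗ[ℂ] V3, IsDerA1 d ↔
      (d e1 = 0 ∧ d e2 ∈ Submodule.span ℂ {e2, e3} ∧ d e3 ∈ Submodule.span ℂ {e2, e3})) ∧
    (∀ d : V3 →ₗ[ℂ] V3, IsDerA1 d ↔ d ∈ Submodule.span ℂ {d1, d2, d3, d4}) ∧
    Module.finrank ℂ (Submodule.span ℂ {d1, d2, d3, d4} : Submodule ℂ (V3 →ₗ[ℂ] V3)) = 4 := by
  obtain ⟨p1, h12, h13, p2, h22, h23, p3, h32, h33, p4, h42e, h42⟩ := dvals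
  refine ⟨?_, ?_, finrank4⟩
  · intro d
    rw [isDer_iff, first_coord_iff, first_coord_iff]
  · intro d
    rw [isDer_iff, mem_span4]
    constructor
    · rintro ⟨hd1, hd2, hd3⟩
      have hd2' : d ![0, 1, 0] 0 = 0 := hd2
      have hd3' : d ![0, 0, 1] 0 = 0 := hd3
      refine ⟨d e2 1, d e3 2, d e2 2, d e3 1, ?_⟩
      apply lmap_ext
      · simp [p1, p2, p3, p4, hd1]
      · simp [h12, h22, h32, h42e]
        funext k
        fin_cases k <;> simp [e2, e3, hd2']
      · simp [h13, h23, h33, h42]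
        funext k
        fin_cases k <;> simp [e2, e3, hd3']
    · rintro ⟨a, b, c, f, rfl⟩
      refine ⟨by simp [p1, p2, p3, p4], ?_, ?_⟩ <;>
        simp [(firstrow e2).1, (firstrow e2).2.1, (firstrow e2).2.2.1, (firstrow e2).2.2.2,
          (firstrow e3).1, (firstrow e3).2.1, (firstrow e3).2.2.1, (firstrow e3).2.2.2]
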